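/- arXiv:math/0601715 — 3 statements merged into one kernel-verified Lean document; each statement's English description precedes it below -/
import Mathlib

section
/- The subgroup Γ_V(2) of SL(2,ℤ) is generated by the two matrices V = [[0,-1],[1,0]] and T = [[1,2],[0,1]]: every matrix A ∈ SL(2,ℤ) with both products d₁·d₂ and d₃·d₄ of its entries even is a finite product of V, T and their inverses. -/
/-- `SL(2, ℤ)`: the group of 2×2 integer matrices of determinant 1. -/
abbrev SL2Z := Matrix.SpecialLinearGroup (Fin 2) ℤ

/-- `V = [[0,-1],[1,0]]` as an element of `SL(2,ℤ)`. -/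
def V : SL2Z := ⟨!![0, -1; 1, 0], by norm_num [Matrix.det_fin_two_of]⟩

/-- `T = [[1,2],[0,1]]` as an element of `SL(2,ℤ)`. -/
def T : SL2Z := ⟨!![1, 2; 0, 1], by norm_num [Matrix.det_fin_two_of]⟩

def Tinv : SL2Z := ⟨!![1, -2; 0, 1], by norm_num [Matrix.det_fin_two_of]⟩

lemma T_mul_Tinv : T * Tinv = 1 := by
  ext i j
  rw [Matrix.SpecialLinearGroup.coe_mul]
  fin_cases i <;> fin_cases j <;>
    simp [T, Tinv, Matrix.mul_apply, Fin.sum_univ_two]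

lemma Tinv_eq : Tinv = T⁻¹ := eq_inv_of_mul_eq_one_right T_mul_Tinv

lemma Tpow_coe (k : ℤ) : ((T ^ k : SL2Z) : Matrix (Fin 2) (Fin 2) ℤ) = !![1, 2*k; 0, 1] := by
  induction k using Int.induction_on with
  | zero => rw [zpow_zero]; simp [Matrix.one_fin_two]
  | succ k ih =>
      rw [zpow_add, zpow_one, Matrix.SpecialLinearGroup.coe_mul, ih]
      ext i j
      fin_cases i <;> fin_cases j <;>
        simp [T, Matrix.mul_apply, Fin.sum_univ_two] <;> ring
  | pred k ih =>
      have h : (-(k:ℤ) - 1) = -k + (-1) := by ring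
      rw [h, zpow_add, zpow_neg_one, ← Tinv_eq, Matrix.SpecialLinearGroup.coe_mul, ih]
      ext i j
      fin_cases i <;> fin_cases j <;>
        simp [Tinv, Matrix.mul_apply, Fin.sum_univ_two] <;> ring

lemma Vsq_coe : ((V ^ 2 : SL2Z) : Matrix (Fin 2) (Fin 2) ℤ) = !![-1, 0; 0, -1] := by
  rw [sq, Matrix.SpecialLinearGroup.coe_mul]
  ext i j
  fin_cases i <;> fin_cases j <;> simp [V, Matrix.mul_apply, Fin.sum_univ_two]

lemma mul_entry (A B : SL2Z) (i j : Fin 2) :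
    ((A * B : SL2Z) : Matrix (Fin 2) (Fin 2) ℤ) i j =
      (A : Matrix (Fin 2) (Fin 2) ℤ) i 0 * (B : Matrix (Fin 2) (Fin 2) ℤ) 0 j
      + (A : Matrix (Fin 2) (Fin 2) ℤ) i 1 * (B : Matrix (Fin 2) (Fin 2) ℤ) 1 j := by
  simp [Matrix.mul_apply, Fin.sum_univ_two]

lemma detA (A : SL2Z) :
    (A : Matrix (Fin 2) (Fin 2) ℤ) 0 0 * (A : Matrix (Fin 2) (Fin 2) ℤ) 1 1
      - (A : Matrix (Fin 2) (Fin 2) ℤ) 0 1 * (A : Matrix (Fin 2) (Fin 2) ℤ) 1 0 = 1 := by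
  have := A.2; rw [Matrix.det_fin_two] at this; exact this

lemma hV_mem : V ∈ Subgroup.closure ({V, T} : Set SL2Z) :=
  Subgroup.subset_closure (Set.mem_insert _ _)

lemma hT_mem : T ∈ Subgroup.closure ({V, T} : Set SL2Z) :=
  Subgroup.subset_closure (by simp)

lemma base (A : SL2Z) (hc : (A : Matrix (Fin 2) (Fin 2) ℤ) 1 0 = 0)
    (h1 : Even ((A : Matrix (Fin 2) (Fin 2) ℤ) 0 0 * (A : Matrix (Fin 2) (Fin 2) ℤ) 0 1)) :
    A ∈ Subgroup.closure ({V, T} : Set SL2Z) := by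
  have hdet := detA A
  rw [hc, mul_zero, sub_zero] at hdet
  rcases Int.mul_eq_one_iff_eq_one_or_neg_one.mp hdet with ⟨ha, hd⟩ | ⟨ha, hd⟩
  · have hb : Even ((A : Matrix (Fin 2) (Fin 2) ℤ) 0 1) := by
      rw [ha, one_mul] at h1; exact h1
    obtain ⟨k, hk⟩ := hb
    have hA : A = T ^ k := by
      apply Subtype.ext
      rw [Tpow_coe]
      ext i j
      fin_cases i <;> fin_cases j <;> simp [ha, hd, hc, hk] <;> omega
    rw [hA]
    exact zpow_mem hT_mem k
  · have hb : Even ((A : Matrix (Fin 2) (Fin 2) ℤ) 0 1) := by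
      rw [ha] at h1
      obtain ⟨r, hr⟩ := h1
      exact ⟨-r, by omega⟩
    obtain ⟨k, hk⟩ := hb
    have hA : A = V ^ 2 * T ^ (-k) := by
      apply Subtype.ext
      rw [Matrix.SpecialLinearGroup.coe_mul, Tpow_coe, Vsq_coe]
      ext i j
      fin_cases i <;> fin_cases j <;>
        simp [ha, hd, hc, hk, Matrix.mul_apply, Fin.sum_univ_two] <;> omega
    rw [hA]
    exact mul_mem (pow_mem hV_mem 2) (zpow_mem hT_mem (-k))

lemma parity (A : SL2Z)
    (h1 : Even ((A : Matrix (Fin 2) (Fin 2) ℤ) 0 0 * (A : Matrix (Fin 2) (Fin 2) ℤ) 0 1))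
    (h2 : Even ((A : Matrix (Fin 2) (Fin 2) ℤ) 1 0 * (A : Matrix (Fin 2) (Fin 2) ℤ) 1 1)) :
    ¬ Even ((A : Matrix (Fin 2) (Fin 2) ℤ) 0 0 + (A : Matrix (Fin 2) (Fin 2) ℤ) 1 0) := by
  intro heven
  have hdet := detA A
  set a := (A : Matrix (Fin 2) (Fin 2) ℤ) 0 0
  set b := (A : Matrix (Fin 2) (Fin 2) ℤ) 0 1
  set c := (A : Matrix (Fin 2) (Fin 2) ℤ) 1 0
  set d := (A : Matrix (Fin 2) (Fin 2) ℤ) 1 1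
  rcases Int.even_or_odd a with ha | ha
  · have hcE : Even c := (Int.even_add.mp heven).mp ha
    have hE : Even (a * d - b * c) := (ha.mul_right d).sub (hcE.mul_left b)
    rw [hdet] at hE
    obtain ⟨r, hr⟩ := hE; omega
  · have haO : ¬ Even a := Int.not_even_iff_odd.mpr ha
    have hcO : ¬ Even c := fun h => haO ((Int.even_add.mp heven).mpr h)
    have hbE : Even b := (Int.even_mul.mp h1).resolve_left haO
    have hdE : Even d := (Int.even_mul.mp h2).resolve_left hcO
    have hE : Even (a * d - b * c) := (hdE.mul_left a).sub (hbE.mul_right c)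
    rw [hdet] at hE
    obtain ⟨r, hr⟩ := hE; omega

lemma main : ∀ N M : ℕ, ∀ A : SL2Z,
    Even ((A : Matrix (Fin 2) (Fin 2) ℤ) 0 0 * (A : Matrix (Fin 2) (Fin 2) ℤ) 0 1) →
    Even ((A : Matrix (Fin 2) (Fin 2) ℤ) 1 0 * (A : Matrix (Fin 2) (Fin 2) ℤ) 1 1) →
    ((A : Matrix (Fin 2) (Fin 2) ℤ) 1 0).natAbs < N →
    ((A : Matrix (Fin 2) (Fin 2) ℤ) 0 0).natAbs < M →
    A ∈ Subgroup.closure ({V, T} : Set SL2Z) := by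
  intro N
  induction N with
  | zero => intro M A _ _ h _; omega
  | succ N ihN =>
    intro M
    induction M with
    | zero => intro A _ _ _ h; omega
    | succ M ihM =>
      intro A h1 h2 hcN haM
      set a := (A : Matrix (Fin 2) (Fin 2) ℤ) 0 0 with ha_def
      set b := (A : Matrix (Fin 2) (Fin 2) ℤ) 0 1 with hb_def
      set c := (A : Matrix (Fin 2) (Fin 2) ℤ) 1 0 with hc_def
      set d := (A : Matrix (Fin 2) (Fin 2) ℤ) 1 1 with hd_def
      by_cases hc0 : c = 0
      · exact base A hc0 h1
      · -- entries of V * A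
        have v00 : ((V * A : SL2Z) : Matrix (Fin 2) (Fin 2) ℤ) 0 0 = -c := by
          rw [mul_entry]; simp [V, ← hc_def]
        have v01 : ((V * A : SL2Z) : Matrix (Fin 2) (Fin 2) ℤ) 0 1 = -d := by
          rw [mul_entry]; simp [V, ← hd_def]
        have v10 : ((V * A : SL2Z) : Matrix (Fin 2) (Fin 2) ℤ) 1 0 = a := by
          rw [mul_entry]; simp [V, ← ha_def]
        have v11 : ((V * A : SL2Z) : Matrix (Fin 2) (Fin 2) ℤ) 1 1 = b := by
          rw [mul_entry]; simp [V, ← hb_def]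
        by_cases hlt : a.natAbs < c.natAbs
        · have hmem : V * A ∈ Subgroup.closure ({V, T} : Set SL2Z) := by
            apply ihN (c.natAbs + 1) (V * A)
            · rw [v00, v01]
              obtain ⟨r, hr⟩ := h2
              exact ⟨r, by linear_combination hr⟩
            · rw [v10, v11]; exact h1
            · rw [v10]; omega
            · rw [v00]; simp [Int.natAbs_neg]
          have : A = V⁻¹ * (V * A) := by group
          rw [this]
          exact mul_mem (inv_mem hV_mem) hmem
        · have hne : a.natAbs ≠ c.natAbs := by
            intro h
            rcases Int.natAbs_eq_natAbs_iff.mp h with h' | h'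
            · exact parity A h1 h2 ⟨a, by omega⟩
            · exact parity A h1 h2 ⟨0, by omega⟩
          have hgt : c.natAbs < a.natAbs := by omega
          have hstep : (a - 2*c).natAbs < a.natAbs ∨ (a + 2*c).natAbs < a.natAbs := by
            omega
          rcases hstep with hs | hs
          · -- use Tinv * A
            have t00 : ((Tinv * A : SL2Z) : Matrix (Fin 2) (Fin 2) ℤ) 0 0 = a - 2*c := by
              rw [mul_entry]; simp [Tinv, ← ha_def, ← hc_def]; ring
            have t01 : ((Tinv * A : SL2Z) : Matrix (Fin 2) (Fin 2) ℤ) 0 1 = b - 2*d := by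
              rw [mul_entry]; simp [Tinv, ← hb_def, ← hd_def]; ring
            have t10 : ((Tinv * A : SL2Z) : Matrix (Fin 2) (Fin 2) ℤ) 1 0 = c := by
              rw [mul_entry]; simp [Tinv, ← hc_def]
            have t11 : ((Tinv * A : SL2Z) : Matrix (Fin 2) (Fin 2) ℤ) 1 1 = d := by
              rw [mul_entry]; simp [Tinv, ← hd_def]
            have hmem : Tinv * A ∈ Subgroup.closure ({V, T} : Set SL2Z) := by
              apply ihM (Tinv * A)
              · rw [t00, t01]
                obtain ⟨r, hr⟩ := h1
                exact ⟨r - a*d - c*b + 2*c*d, by linear_combination hr⟩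
              · rw [t10, t11]; exact h2
              · rw [t10]; exact hcN
              · rw [t00]; omega
            have : A = Tinv⁻¹ * (Tinv * A) := by group
            rw [this]
            exact mul_mem (inv_mem (Tinv_eq ▸ inv_mem hT_mem)) hmem
          · -- use T * A
            have t00 : ((T * A : SL2Z) : Matrix (Fin 2) (Fin 2) ℤ) 0 0 = a + 2*c := by
              rw [mul_entry]; simp [T, ← ha_def, ← hc_def]
            have t01 : ((T * A : SL2Z) : Matrix (Fin 2) (Fin 2) ℤ) 0 1 = b + 2*d := by
              rw [mul_entry]; simp [T, ← hb_def, ← hd_def]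
            have t10 : ((T * A : SL2Z) : Matrix (Fin 2) (Fin 2) ℤ) 1 0 = c := by
              rw [mul_entry]; simp [T, ← hc_def]
            have t11 : ((T * A : SL2Z) : Matrix (Fin 2) (Fin 2) ℤ) 1 1 = d := by
              rw [mul_entry]; simp [T, ← hd_def]
            have hmem : T * A ∈ Subgroup.closure ({V, T} : Set SL2Z) := by
              apply ihM (T * A)
              · rw [t00, t01]
                obtain ⟨r, hr⟩ := h1
                exact ⟨r + a*d + c*b + 2*c*d, by linear_combination hr⟩
              · rw [t10, t11]; exact h2
              · rw [t10]; exact hcN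
              · rw [t00]; omega
            have : A = T⁻¹ * (T * A) := by group
            rw [this]
            exact mul_mem (inv_mem hT_mem) hmem

/-- Every matrix `A = [[d₁,d₂],[d₃,d₄]] ∈ SL(2,ℤ)` with both products `d₁·d₂` and `d₃·d₄`
even lies in the subgroup generated by `V` and `T`, i.e. is a finite product of
`V`, `T` and their inverses. -/
theorem gammaV_generated_by_V_T (A : SL2Z)
    (h1 : Even ((A : Matrix (Fin 2) (Fin 2) ℤ) 0 0 * (A : Matrix (Fin 2) (Fin 2) ℤ) 0 1))
    (h2 : Even ((A : Matrix (Fin 2) (Fin 2) ℤ) 1 0 * (A : Matrix (Fin 2) (Fin 2) ℤ) 1 1)) :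
    A ∈ Subgroup.closure ({V, T} : Set SL2Z) := by
  exact main (((A : Matrix (Fin 2) (Fin 2) ℤ) 1 0).natAbs + 1)
    (((A : Matrix (Fin 2) (Fin 2) ℤ) 0 0).natAbs + 1) A h1 h2 (by omega) (by omega)
end

section
/- The group Γ_V(2) admits the presentation ⟨v, t | v⁴ = 1, v²·t·v⁻²·t⁻¹ = 1⟩; more precisely, the group homomorphism from the presented group on two generators v, t with relators v⁴ and v²tv⁻²t⁻¹ to Γ_V(2), determined by sending v to V = [[0,-1],[1,0]] and t to T = [[1,2],[0,1]], is a group isomorphism. -/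
private lemma even_iff_cast (d : ℤ) : Even d ↔ ((d : ZMod 2) = 0) := by
  rw [even_iff_two_dvd, ZMod.intCast_zmod_eq_zero_iff_dvd]
  norm_num

private lemma key_mul : ∀ a a' b1 b2 b3 b4 : ZMod 2, a*a' = 0 → b1*b2 = 0 → b3*b4 = 0 →
    (a*b1 + a'*b3) * (a*b2 + a'*b4) = 0 := by decide

private lemma key_inv : ∀ a b c d : ZMod 2, a*d - b*c = 1 → a*b = 0 → c*d = 0 →
    d*(-b) = 0 ∧ (-c)*a = 0 := by decide

/-- `Γ_V(2)`: the subgroup of `SL(2,ℤ)` consisting of the matrices `[[d₁,d₂],[d₃,d₄]]`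
with both products `d₁·d₂` and `d₃·d₄` even. -/
def GammaV2 : Subgroup SL2Z where
  carrier := {A : SL2Z |
    Even ((A : Matrix (Fin 2) (Fin 2) ℤ) 0 0 * (A : Matrix (Fin 2) (Fin 2) ℤ) 0 1) ∧
    Even ((A : Matrix (Fin 2) (Fin 2) ℤ) 1 0 * (A : Matrix (Fin 2) (Fin 2) ℤ) 1 1)}
  one_mem' := by
    constructor <;> simp [Matrix.SpecialLinearGroup.coe_one]
  mul_mem' := by
    rintro A B ⟨hA1, hA2⟩ ⟨hB1, hB2⟩
    rw [even_iff_cast] at hA1 hA2 hB1 hB2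
    push_cast at hA1 hA2 hB1 hB2
    constructor
    · rw [even_iff_cast]
      simp only [Matrix.SpecialLinearGroup.coe_mul, Matrix.mul_apply, Fin.sum_univ_two]
      push_cast
      exact key_mul _ _ _ _ _ _ hA1 hB1 hB2
    · rw [even_iff_cast]
      simp only [Matrix.SpecialLinearGroup.coe_mul, Matrix.mul_apply, Fin.sum_univ_two]
      push_cast
      exact key_mul _ _ _ _ _ _ hA2 hB1 hB2
  inv_mem' := by
    rintro A ⟨hA1, hA2⟩
    rw [even_iff_cast] at hA1 hA2
    push_cast at hA1 hA2
    have hdet : (A : Matrix (Fin 2) (Fin 2) ℤ).det = 1 := A.prop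
    rw [Matrix.det_fin_two] at hdet
    have hdet2 : ((A : Matrix (Fin 2) (Fin 2) ℤ) 0 0 : ZMod 2) * ((A : Matrix (Fin 2) (Fin 2) ℤ) 1 1 : ZMod 2)
        - ((A : Matrix (Fin 2) (Fin 2) ℤ) 0 1 : ZMod 2) * ((A : Matrix (Fin 2) (Fin 2) ℤ) 1 0 : ZMod 2) = 1 := by
      have h := congrArg (fun z : ℤ => (z : ZMod 2)) hdet
      push_cast at h
      exact h
    obtain ⟨h1, h2⟩ := key_inv _ _ _ _ hdet2 hA1 hA2
    rw [Matrix.SpecialLinearGroup.SL2_inv_expl A]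
    constructor
    · rw [even_iff_cast]
      show ((((A : Matrix (Fin 2) (Fin 2) ℤ) 1 1) * (-(A : Matrix (Fin 2) (Fin 2) ℤ) 0 1) : ℤ) : ZMod 2) = 0
      push_cast
      exact h1
    · rw [even_iff_cast]
      show (((-(A : Matrix (Fin 2) (Fin 2) ℤ) 1 0) * ((A : Matrix (Fin 2) (Fin 2) ℤ) 0 0) : ℤ) : ZMod 2) = 0
      push_cast
      exact h2

lemma V_mem : V ∈ GammaV2 := by constructor <;> simp [V]

lemma T_mem : T ∈ GammaV2 := by constructor <;> simp [T]

/-- The relators `v⁴` and `v²·t·v⁻²·t⁻¹` in the free group on two generators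
`v = FreeGroup.of 0` and `t = FreeGroup.of 1`. -/
def gammaRels : Set (FreeGroup (Fin 2)) :=
  {(FreeGroup.of 0) ^ 4,
   (FreeGroup.of 0) ^ 2 * FreeGroup.of 1 * ((FreeGroup.of 0) ^ 2)⁻¹ * (FreeGroup.of 1)⁻¹}


/-! ### Auxiliary development -/

namespace GammaV2Pres
noncomputable section
open Pointwise

/-! #### Matrix algebra for `V` and `T` -/

lemma Vsq_val : (V * V : SL2Z).val = !![-1,0;0,-1] := by
  rw [Matrix.SpecialLinearGroup.coe_mul]
  simp [V, Matrix.mul_fin_two]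

lemma V4 : (V : SL2Z) ^ 4 = 1 := by
  have h : (V*V : SL2Z) * (V*V) = 1 := by
    apply Subtype.ext
    rw [Matrix.SpecialLinearGroup.coe_mul, Vsq_val, Matrix.SpecialLinearGroup.coe_one,
      Matrix.mul_fin_two, Matrix.one_fin_two]
    norm_num
  rw [pow_succ, pow_succ, pow_succ, pow_one, mul_assoc]
  exact h

lemma VVT : (V * V) * T = T * (V * V) := by
  apply Subtype.ext
  rw [Matrix.SpecialLinearGroup.coe_mul, Matrix.SpecialLinearGroup.coe_mul,
    Matrix.SpecialLinearGroup.coe_mul, Matrix.SpecialLinearGroup.coe_mul]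
  simp [V, T, Matrix.SpecialLinearGroup.coe_mul, Matrix.mul_fin_two]

lemma Tzpow (k : ℤ) : (T ^ k : SL2Z).val = !![1, 2*k; 0, 1] := by
  induction k using Int.induction_on with
  | zero => simp [Matrix.SpecialLinearGroup.coe_one, Matrix.one_fin_two]
  | succ n ih =>
      rw [zpow_add_one, Matrix.SpecialLinearGroup.coe_mul, ih]
      simp [T, Matrix.mul_fin_two]; ring
  | pred n ih =>
      rw [sub_eq_add_neg, zpow_add, Matrix.SpecialLinearGroup.coe_mul, ih]
      have h : (T ^ (-1 : ℤ) : SL2Z).val = !![1,-2;0,1] := by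
        rw [zpow_neg_one, Matrix.SpecialLinearGroup.SL2_inv_expl]
        simp [T]; rfl
      rw [h, Matrix.mul_fin_two]
      norm_num; ring

/-! #### The homomorphism `φ` from the presented group -/

def toFam : Fin 2 → GammaV2 := fun i => match i with
  | 0 => ⟨V, V_mem⟩
  | 1 => ⟨T, T_mem⟩

lemma relsHold : ∀ r ∈ gammaRels, FreeGroup.lift toFam r = 1 := by
  rintro r (rfl | rfl)
  · rw [map_pow, FreeGroup.lift_apply_of]
    apply Subtype.ext
    show ((toFam 0 : GammaV2) : SL2Z) ^ 4 = 1
    show (V : SL2Z) ^ 4 = 1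
    exact V4
  · simp only [map_mul, map_inv, map_pow, FreeGroup.lift_apply_of]
    apply Subtype.ext
    push_cast
    show (V:SL2Z)^2 * T * ((V:SL2Z)^2)⁻¹ * T⁻¹ = 1
    rw [pow_two, VVT]
    group

def φ : PresentedGroup gammaRels →* GammaV2 := PresentedGroup.toGroup relsHold

lemma φ_of0 : φ (PresentedGroup.of 0) = ⟨V, V_mem⟩ := PresentedGroup.toGroup.of relsHold
lemma φ_of1 : φ (PresentedGroup.of 1) = ⟨T, T_mem⟩ := PresentedGroup.toGroup.of relsHold

/-! #### Möbius action on the irrationals -/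

def mo (A : SL2Z) (x : ℝ) : ℝ :=
  ((A.val 0 0 : ℝ) * x + (A.val 0 1 : ℝ)) / ((A.val 1 0 : ℝ) * x + (A.val 1 1 : ℝ))

lemma denom_ne (A : SL2Z) {x : ℝ} (hx : Irrational x) :
    (A.val 1 0 : ℝ) * x + (A.val 1 1 : ℝ) ≠ 0 := by
  have hdet : A.val 0 0 * A.val 1 1 - A.val 0 1 * A.val 1 0 = 1 := by
    have := A.prop; rwa [Matrix.det_fin_two] at this
  rcases eq_or_ne (A.val 1 0) 0 with hc | hc
  · have hd : A.val 1 1 ≠ 0 := by rintro h; rw [hc, h] at hdet; omega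
    simp [hc]
    exact_mod_cast hd
  · intro h
    apply hx.ne_rat (q := (-(A.val 1 1 : ℚ)) / (A.val 1 0 : ℚ))
    have hc' : (A.val 1 0 : ℝ) ≠ 0 := by exact_mod_cast hc
    push_cast
    field_simp at h ⊢
    linarith

lemma num_ne (A : SL2Z) {x : ℝ} (hx : Irrational x) :
    (A.val 0 0 : ℝ) * x + (A.val 0 1 : ℝ) ≠ 0 := by
  have := denom_ne (V * A) hx
  rw [Matrix.SpecialLinearGroup.coe_mul] at this
  simpa [V, Matrix.mul_fin_two, Matrix.mul_apply, Fin.sum_univ_two] using this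

lemma mo_one {x : ℝ} : mo 1 x = x := by
  simp [mo, Matrix.SpecialLinearGroup.coe_one]

lemma mo_mul (A B : SL2Z) {x : ℝ} (hx : Irrational x) :
    mo (A * B) x = mo A (mo B x) := by
  have hB := denom_ne B hx
  have hAB := denom_ne (A * B) hx
  have hABn := num_ne (A * B) hx
  have key : (A.val 1 0 : ℝ) * mo B x + (A.val 1 1 : ℝ)
      = (((A*B).val 1 0 : ℝ) * x + ((A*B).val 1 1 : ℝ)) / ((B.val 1 0 : ℝ) * x + (B.val 1 1 : ℝ)) := by
    rw [mo, mul_div_assoc', div_add' _ _ _ hB]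
    congr 1
    simp [Matrix.SpecialLinearGroup.coe_mul, Matrix.mul_apply, Fin.sum_univ_two]
    push_cast
    ring
  have key2 : (A.val 0 0 : ℝ) * mo B x + (A.val 0 1 : ℝ)
      = (((A*B).val 0 0 : ℝ) * x + ((A*B).val 0 1 : ℝ)) / ((B.val 1 0 : ℝ) * x + (B.val 1 1 : ℝ)) := by
    rw [mo, mul_div_assoc', div_add' _ _ _ hB]
    congr 1
    simp [Matrix.SpecialLinearGroup.coe_mul, Matrix.mul_apply, Fin.sum_univ_two]
    push_cast
    ring
  rw [mo, mo, key, key2]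
  rw [div_div_div_cancel_right₀ hB]

lemma mo_irrational (A : SL2Z) {x : ℝ} (hx : Irrational x) : Irrational (mo A x) := by
  rintro ⟨q, hq⟩
  have hxx : mo A⁻¹ (mo A x) = x := by
    rw [← mo_mul A⁻¹ A hx, inv_mul_cancel, mo_one]
  rw [← hq] at hxx
  rcases eq_or_ne ((A⁻¹.val 1 0 : ℝ) * q + (A⁻¹.val 1 1 : ℝ)) 0 with h0 | h0
  · rw [mo, h0, div_zero] at hxx
    exact hx ⟨0, by simp [hxx]⟩
  · apply hx
    refine ⟨((A⁻¹.val 0 0 : ℚ) * q + (A⁻¹.val 0 1 : ℚ)) / ((A⁻¹.val 1 0 : ℚ) * q + (A⁻¹.val 1 1 : ℚ)), ?_⟩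
    rw [← hxx, mo]
    push_cast
    ring

/-- The irrational numbers. -/
def Irr : Type := {x : ℝ // Irrational x}

/-- Möbius action as a permutation of the irrationals. -/
def mPerm (A : SL2Z) : Equiv.Perm Irr where
  toFun x := ⟨mo A x.1, mo_irrational A x.2⟩
  invFun x := ⟨mo A⁻¹ x.1, mo_irrational A⁻¹ x.2⟩
  left_inv x := by
    apply Subtype.ext
    show mo A⁻¹ (mo A x.1) = x.1
    rw [← mo_mul A⁻¹ A x.2, inv_mul_cancel, mo_one]
  right_inv x := by
    apply Subtype.ext
    show mo A (mo A⁻¹ x.1) = x.1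
    rw [← mo_mul A A⁻¹ x.2, mul_inv_cancel, mo_one]

/-- Möbius action as a homomorphism to the permutation group of the irrationals. -/
def mHom : SL2Z →* Equiv.Perm Irr where
  toFun := mPerm
  map_one' := by
    ext x
    apply Subtype.ext
    show mo 1 x.1 = x.1
    exact mo_one
  map_mul' A B := by
    ext x
    apply Subtype.ext
    show mo (A * B) x.1 = mo A (mo B x.1)
    exact mo_mul A B x.2

def vP : Equiv.Perm Irr := mHom V
def tP : Equiv.Perm Irr := mHom T

lemma vP_apply (x : Irr) : (vP x).1 = -1 / x.1 := by
  show mo V x.1 = -1 / x.1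
  simp [mo, V]

lemma tP_apply (x : Irr) : (tP x).1 = x.1 + 2 := by
  show mo T x.1 = x.1 + 2
  simp [mo, T]

lemma vP_sq : vP * vP = 1 := by
  ext x
  apply Subtype.ext
  show ((vP (vP x)).1 : ℝ) = x.1
  rw [vP_apply, vP_apply]
  have hx : (x.1 : ℝ) ≠ 0 := x.2.ne_zero
  field_simp

lemma tP_zpow (k : ℤ) : ∀ x : Irr, ((tP ^ k) x).1 = x.1 + 2 * k := by
  induction k using Int.induction_on with
  | zero => simp
  | succ n ih =>
      intro x
      rw [_root_.zpow_add_one, Equiv.Perm.mul_apply, ih (tP x), tP_apply]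
      push_cast; ring
  | pred n ih =>
      intro x
      have h2 : ∀ z : Irr, ((tP⁻¹) z).1 = z.1 - 2 := by
        intro z
        have := tP_apply (tP⁻¹ z)
        rw [show tP (tP⁻¹ z) = z from Equiv.apply_symm_apply tP z] at this
        linarith
      have h1 : ((tP ^ (-(n:ℤ) - 1)) x).1 = ((tP ^ (-(n:ℤ))) (tP⁻¹ x)).1 := by
        rw [sub_eq_add_neg, _root_.zpow_add, _root_.zpow_neg_one, Equiv.Perm.mul_apply]
      rw [h1, ih (tP⁻¹ x), h2 x]
      push_cast; ring

lemma tP_zpow_ne_one {k : ℤ} (hk : k ≠ 0) : tP ^ k ≠ 1 := by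
  intro h
  have x0 : Irr := ⟨Real.sqrt 2, irrational_sqrt_two⟩
  have h2 := tP_zpow k x0
  rw [h] at h2
  simp at h2
  exact hk (by exact_mod_cast h2)

lemma vP_zpow (k : ℤ) : vP ^ k = 1 ∨ vP ^ k = vP := by
  have h2 : vP ^ (2:ℤ) = 1 := by
    rw [show (2:ℤ) = 1+1 by rfl, _root_.zpow_add, zpow_one, vP_sq]
  rcases Int.even_or_odd k with ⟨m, hm⟩ | ⟨m, hm⟩
  · left; subst hm; rw [show m + m = 2*m by ring, _root_.zpow_mul, h2, one_zpow]
  · right; subst hm; rw [_root_.zpow_add, _root_.zpow_mul, h2, one_zpow, one_mul, zpow_one]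

/-! #### A homomorphism out of `ℤ/2` -/

/-- The homomorphism `Multiplicative (ZMod 2) →* G` sending the generator to an element `g`
with `g * g = 1`. -/
def homOfSq {G : Type*} [Group G] (g : G) (hg : g * g = 1) : Multiplicative (ZMod 2) →* G where
  toFun x := g ^ (Multiplicative.toAdd x).val
  map_one' := by
    show g ^ (0 : ZMod 2).val = 1
    norm_num [ZMod.val_zero]
  map_mul' x y := by
    have hgg : g ^ 2 = 1 := by rw [pow_two]; exact hg
    have key : ∀ m n : ℕ, m % 2 = n % 2 → g ^ m = g ^ n := by
      intro m n h
      have hm := Nat.div_add_mod m 2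
      have hn := Nat.div_add_mod n 2
      calc g ^ m = g ^ (2*(m/2) + m%2) := by rw [hm]
        _ = (g^2)^(m/2) * g^(m%2) := by rw [pow_add, pow_mul]
        _ = g^(n%2) := by rw [hgg, one_pow, one_mul, h]
        _ = (g^2)^(n/2) * g^(n%2) := by rw [hgg, one_pow, one_mul]
        _ = g ^ n := by rw [← pow_mul, ← pow_add, hn]
    show g ^ (Multiplicative.toAdd (x*y)).val
        = g ^ (Multiplicative.toAdd x).val * g ^ (Multiplicative.toAdd y).val
    rw [← pow_add]
    apply key
    have hxy : Multiplicative.toAdd (x*y) = Multiplicative.toAdd x + Multiplicative.toAdd y := rfl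
    rw [hxy, ZMod.val_add]
    omega

lemma homOfSq_gen {G : Type*} [Group G] (g : G) (hg : g * g = 1) :
    homOfSq g hg (Multiplicative.ofAdd 1) = g := by
  show g ^ (1 : ZMod 2).val = g
  rw [ZMod.val_one]
  exact pow_one g

lemma zmod2_cases (y : ZMod 2) : y = 0 ∨ y = 1 := by revert y; decide

/-! #### Ping pong -/

def Hfam : Fin 2 → Type := fun i => match i with
  | 0 => Multiplicative (ZMod 2)
  | 1 => Multiplicative ℤ

instance instHfam : ∀ i, Group (Hfam i) := fun i => match i with
  | 0 => inferInstanceAs (Group (Multiplicative (ZMod 2)))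
  | 1 => inferInstanceAs (Group (Multiplicative ℤ))

def fam : ∀ i, Hfam i →* Equiv.Perm Irr := fun i => match i with
  | 0 => homOfSq vP vP_sq
  | 1 => zpowersHom _ tP

def XX : Fin 2 → Set Irr := fun i => match i with
  | 0 => {x : Irr | |x.1| < 1}
  | 1 => {x : Irr | 1 < |x.1|}

lemma sqrt2_bounds : 1 < Real.sqrt 2 ∧ Real.sqrt 2 < 2 := by
  constructor
  · nlinarith [Real.sq_sqrt (by norm_num : (2:ℝ) ≥ 0), Real.sqrt_nonneg 2]
  · nlinarith [Real.sq_sqrt (by norm_num : (2:ℝ) ≥ 0), Real.sqrt_nonneg 2]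

lemma XXne : ∀ i, (XX i).Nonempty := by
  intro i
  match i with
  | 0 =>
    refine ⟨⟨Real.sqrt 2 - 1, by exact_mod_cast irrational_sqrt_two.sub_natCast 1⟩, ?_⟩
    have := sqrt2_bounds
    simp only [XX, Set.mem_setOf_eq, abs_lt]
    constructor <;> [linarith; linarith]
  | 1 =>
    refine ⟨⟨Real.sqrt 2, irrational_sqrt_two⟩, ?_⟩
    have := sqrt2_bounds
    show 1 < |Real.sqrt 2|
    simp only [XX, Set.mem_setOf_eq, abs_of_pos (by linarith : (0:ℝ) < Real.sqrt 2)]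
    linarith

lemma XXdisj01 : Disjoint (XX 0) (XX 1) := by
  rw [Set.disjoint_left]
  intro x hx hx'
  simp only [XX, Set.mem_setOf_eq] at hx hx'
  linarith

lemma XXdisj : Pairwise (Function.onFun Disjoint XX) := by
  intro i j hij
  fin_cases i <;> fin_cases j
  · exact absurd rfl hij
  · exact XXdisj01
  · exact XXdisj01.symm
  · exact absurd rfl hij

lemma hpp01 : ∀ h : Hfam 0, h ≠ 1 → fam 0 h • XX 1 ⊆ XX 0 := by
  intro h hne
  have hval : fam 0 h = vP := by
    rcases zmod2_cases (Multiplicative.toAdd h) with h0 | h0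
    · exfalso
      apply hne
      have : h = Multiplicative.ofAdd (0 : ZMod 2) := by
        apply Multiplicative.toAdd.injective
        exact h0
      rw [this]
      rfl
    · have : h = Multiplicative.ofAdd (1 : ZMod 2) := by
        apply Multiplicative.toAdd.injective
        exact h0
      rw [this]
      exact homOfSq_gen vP vP_sq
  rintro y ⟨x, hx, rfl⟩
  show |((fam 0 h • x : Irr)).1| < 1
  have hsm : (fam 0 h • x : Irr) = vP x := by rw [hval]; rfl
  rw [hsm, vP_apply]
  simp only [XX, Set.mem_setOf_eq] at hx
  rw [abs_div, abs_neg, abs_one, div_lt_one (by linarith)]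
  linarith

lemma hpp10 : ∀ h : Hfam 1, h ≠ 1 → fam 1 h • XX 0 ⊆ XX 1 := by
  intro h hne
  set k : ℤ := Multiplicative.toAdd h with hkdef
  have hk : fam 1 h = tP ^ k := rfl
  have hk0' : k ≠ 0 := by
    rintro h0
    apply hne
    apply Multiplicative.toAdd.injective
    exact h0
  rintro y ⟨x, hx, rfl⟩
  show 1 < |((fam 1 h • x : Irr)).1|
  have hsm : (fam 1 h • x : Irr) = (tP ^ k) x := by rw [hk]; rfl
  rw [hsm, tP_zpow k x]
  simp only [XX, Set.mem_setOf_eq] at hx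
  have h1 : (1:ℝ) ≤ |(k:ℝ)| := by
    rw [← Int.cast_abs]
    exact_mod_cast Int.one_le_abs hk0'
  have h2 : |(2*(k:ℝ))| ≤ |x.1 + 2*k| + |x.1| := by
    calc |(2*(k:ℝ))| = |x.1 + 2*k + (-x.1)| := by ring_nf
      _ ≤ |x.1 + 2*k| + |(-x.1)| := abs_add_le _ _
      _ = |x.1 + 2*k| + |x.1| := by rw [abs_neg]
  have h3 : |2*(k:ℝ)| = 2 * |(k:ℝ)| := by rw [abs_mul]; norm_num
  linarith

lemma hpp : Pairwise fun i j => ∀ h : Hfam i, h ≠ 1 → fam i h • XX j ⊆ XX i := by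
  intro i j hij
  fin_cases i <;> fin_cases j
  · exact absurd rfl hij
  · exact hpp01
  · exact hpp10
  · exact absurd rfl hij

lemma hcard : 3 ≤ Cardinal.mk (Fin 2) ∨ ∃ i, 3 ≤ Cardinal.mk (Hfam i) := by
  right
  refine ⟨1, ?_⟩
  have hinf : Infinite (Hfam 1) := inferInstanceAs (Infinite (Multiplicative ℤ))
  calc (3 : Cardinal) ≤ Cardinal.aleph0 := le_of_lt (Cardinal.nat_lt_aleph0 3)
    _ ≤ Cardinal.mk (Hfam 1) := Cardinal.infinite_iff.mp hinf

lemma lift_fam_injective : Function.Injective (Monoid.CoprodI.lift fam) :=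
  Monoid.CoprodI.lift_injective_of_ping_pong fam hcard XX XXne XXdisj hpp

/-! #### The homomorphism `χ` to the free product -/

def x0 : Hfam 0 := Multiplicative.ofAdd (1 : ZMod 2)
def x1 : Hfam 1 := Multiplicative.ofAdd (1 : ℤ)

def cfam : Fin 2 → Monoid.CoprodI Hfam := fun i => match i with
  | 0 => Monoid.CoprodI.of x0
  | 1 => Monoid.CoprodI.of x1

lemma x0_sq : x0 * x0 = 1 := by
  show Multiplicative.ofAdd ((1 : ZMod 2) + 1) = Multiplicative.ofAdd (0 : ZMod 2)
  norm_num
  decide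

lemma crelsHold : ∀ r ∈ gammaRels, FreeGroup.lift cfam r = 1 := by
  have hsq : (Monoid.CoprodI.of x0) * (Monoid.CoprodI.of x0) = 1 := by
    rw [← map_mul, x0_sq, map_one]
  rintro r (rfl | rfl)
  · rw [map_pow, FreeGroup.lift_apply_of]
    show (cfam 0) ^ 4 = 1
    show (Monoid.CoprodI.of x0) ^ 4 = 1
    rw [show (4:ℕ) = 2 + 2 by rfl, pow_add, pow_two, hsq, one_mul]
  · simp only [map_mul, map_inv, map_pow, FreeGroup.lift_apply_of]
    show (cfam 0)^2 * (cfam 1) * ((cfam 0)^2)⁻¹ * (cfam 1)⁻¹ = 1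
    have h2 : (cfam 0)^2 = 1 := by rw [pow_two]; exact hsq
    rw [h2]
    group

def χ : PresentedGroup gammaRels →* Monoid.CoprodI Hfam := PresentedGroup.toGroup crelsHold

/-! #### Compatibility -/

lemma compat : (Monoid.CoprodI.lift fam).comp χ
    = mHom.comp (GammaV2.subtype.comp φ) := by
  apply PresentedGroup.ext
  intro j
  fin_cases j
  · show Monoid.CoprodI.lift fam (χ (PresentedGroup.of 0))
        = mHom (GammaV2.subtype (φ (PresentedGroup.of 0)))
    rw [φ_of0]
    show Monoid.CoprodI.lift fam (χ (PresentedGroup.of 0)) = vP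
    have h1 : χ (PresentedGroup.of 0) = Monoid.CoprodI.of x0 := PresentedGroup.toGroup.of crelsHold
    rw [h1, Monoid.CoprodI.lift_of]
    exact homOfSq_gen vP vP_sq
  · show Monoid.CoprodI.lift fam (χ (PresentedGroup.of 1))
        = mHom (GammaV2.subtype (φ (PresentedGroup.of 1)))
    rw [φ_of1]
    show Monoid.CoprodI.lift fam (χ (PresentedGroup.of 1)) = tP
    have h1 : χ (PresentedGroup.of 1) = Monoid.CoprodI.of x1 := PresentedGroup.toGroup.of crelsHold
    rw [h1, Monoid.CoprodI.lift_of]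
    show tP ^ (1:ℤ) = tP
    exact zpow_one tP

/-! #### The center and the kernel -/

abbrev P := PresentedGroup gammaRels

def vv : P := PresentedGroup.of 0
def tt : P := PresentedGroup.of 1

lemma rel_one_of_mem {r : FreeGroup (Fin 2)} (hr : r ∈ gammaRels) :
    PresentedGroup.mk gammaRels r = 1 := by
  show (QuotientGroup.mk r : FreeGroup (Fin 2) ⧸ Subgroup.normalClosure gammaRels) = 1
  exact (QuotientGroup.eq_one_iff r).mpr (Subgroup.subset_normalClosure hr)

lemma v4 : vv ^ (4:ℕ) = 1 := by
  have h := rel_one_of_mem (show (FreeGroup.of 0)^4 ∈ gammaRels from Or.inl rfl)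
  rw [map_pow] at h
  exact h

lemma vsq_comm_tt : Commute (vv ^ (2:ℕ)) tt := by
  have h := rel_one_of_mem
    (show (FreeGroup.of 0)^2 * FreeGroup.of 1 * ((FreeGroup.of 0)^2)⁻¹ * (FreeGroup.of 1)⁻¹ ∈ gammaRels
      from Or.inr rfl)
  simp only [map_mul, map_inv, map_pow] at h
  rw [← commutatorElement_def] at h
  exact commutatorElement_eq_one_iff_commute.mp h

lemma vsq_central (g : P) : Commute (vv ^ (2:ℕ)) g := by
  have hmem : g ∈ Subgroup.centralizer {vv ^ (2:ℕ)} := by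
    apply PresentedGroup.generated_by
    intro j
    rw [Subgroup.mem_centralizer_iff]
    intro h hh
    rcases hh with rfl
    fin_cases j
    · show vv ^ (2:ℕ) * vv = vv * vv ^ (2:ℕ)
      exact ((Commute.refl vv).pow_left 2)
    · exact vsq_comm_tt
  have := Subgroup.mem_centralizer_iff.mp hmem (vv ^ (2:ℕ)) rfl
  exact this

def N : Subgroup P := Subgroup.zpowers (vv ^ (2:ℕ))

instance N_normal : N.Normal := by
  constructor
  intro n hn g
  obtain ⟨k, hk⟩ := hn
  have hk' : (vv ^ (2:ℕ)) ^ k = n := hk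
  have hc : Commute g n := by
    rw [← hk']
    exact ((vsq_central g).symm.zpow_right k)
  rw [hc.eq, mul_assoc, mul_inv_cancel, mul_one]
  exact ⟨k, hk⟩

lemma mkv_sq : (QuotientGroup.mk' N) vv * (QuotientGroup.mk' N) vv = 1 := by
  rw [← map_mul, ← pow_two]
  exact (QuotientGroup.eq_one_iff _).mpr (Subgroup.mem_zpowers _)

def sfam : ∀ i, Hfam i →* P ⧸ N := fun i => match i with
  | 0 => homOfSq _ mkv_sq
  | 1 => zpowersHom _ (QuotientGroup.mk' N tt)

def σ : Monoid.CoprodI Hfam →* P ⧸ N := Monoid.CoprodI.lift sfam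

lemma compat2 : σ.comp χ = QuotientGroup.mk' N := by
  apply PresentedGroup.ext
  intro j
  fin_cases j
  · show σ (χ (PresentedGroup.of 0)) = QuotientGroup.mk' N vv
    have h1 : χ (PresentedGroup.of 0) = Monoid.CoprodI.of x0 := PresentedGroup.toGroup.of crelsHold
    rw [h1]
    show Monoid.CoprodI.lift sfam (Monoid.CoprodI.of x0) = QuotientGroup.mk' N vv
    rw [Monoid.CoprodI.lift_of]
    exact homOfSq_gen _ mkv_sq
  · show σ (χ (PresentedGroup.of 1)) = QuotientGroup.mk' N tt
    have h1 : χ (PresentedGroup.of 1) = Monoid.CoprodI.of x1 := PresentedGroup.toGroup.of crelsHold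
    rw [h1]
    show Monoid.CoprodI.lift sfam (Monoid.CoprodI.of x1) = QuotientGroup.mk' N tt
    rw [Monoid.CoprodI.lift_of]
    show (QuotientGroup.mk' N tt) ^ (1:ℤ) = QuotientGroup.mk' N tt
    exact zpow_one _

lemma φ_vsq_ne_one : φ (vv ^ (2:ℕ)) ≠ 1 := by
  intro h
  have h1 : ((φ (vv ^ (2:ℕ)) : GammaV2) : SL2Z).val = 1 := by rw [h]; rfl
  have h2 : ((φ (vv ^ (2:ℕ)) : GammaV2) : SL2Z).val = !![-1,0;0,-1] := by
    rw [map_pow, show φ vv = (⟨V, V_mem⟩ : GammaV2) from φ_of0]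
    show (((⟨V, V_mem⟩ : GammaV2) ^ 2 : GammaV2) : SL2Z).val = !![-1,0;0,-1]
    rw [show (((⟨V, V_mem⟩ : GammaV2) ^ 2 : GammaV2) : SL2Z) = (V:SL2Z)^2 from
      SubgroupClass.coe_pow _ _, pow_two, Vsq_val]
  rw [h1] at h2
  have h00 := congrFun (congrFun h2 0) 0
  norm_num [Matrix.one_apply] at h00

lemma φ_injective : Function.Injective φ := by
  rw [injective_iff_map_eq_one]
  intro g hg
  -- first, χ g = 1
  have hχ : χ g = 1 := by
    apply lift_fam_injective
    have h1 := DFunLike.congr_fun compat g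
    simp only [MonoidHom.comp_apply] at h1
    rw [hg] at h1
    simp only [map_one] at h1
    rw [map_one]
    exact h1
  -- hence g ∈ N
  have hN : g ∈ N := by
    have h1 := DFunLike.congr_fun compat2 g
    simp only [MonoidHom.comp_apply] at h1
    rw [hχ, map_one] at h1
    exact (QuotientGroup.eq_one_iff g).mp h1.symm
  obtain ⟨k, hk⟩ := hN
  have hk' : (vv ^ (2:ℕ)) ^ k = g := hk
  rcases Int.even_or_odd k with ⟨m, hm⟩ | ⟨m, hm⟩
  · -- k even : g = (v^4)^m = 1
    rw [← hk', hm]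
    have : (vv ^ (2:ℕ)) ^ (m + m) = ((vv ^ (2:ℕ)) ^ (2:ℤ)) ^ m := by
      rw [← _root_.zpow_mul]
      congr 1
      ring
    rw [this]
    have h4 : (vv ^ (2:ℕ)) ^ (2:ℤ) = 1 := by
      rw [show ((2:ℤ)) = ((2:ℕ):ℤ) by norm_num, zpow_natCast, ← pow_mul]
      exact v4
    rw [h4, one_zpow]
  · -- k odd : φ g = φ (v^2) ≠ 1
    exfalso
    apply φ_vsq_ne_one
    have h4 : ((vv ^ (2:ℕ)) ^ (2:ℤ)) = 1 := by
      rw [show ((2:ℤ)) = ((2:ℕ):ℤ) by norm_num, zpow_natCast, ← pow_mul]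
      exact v4
    have hgv : g = vv ^ (2:ℕ) := by
      rw [← hk', hm, _root_.zpow_add, _root_.zpow_mul, h4, one_zpow, one_mul, zpow_one]
    rw [← hgv]
    exact hg

/-! #### Surjectivity -/

lemma parity_lemma (A : GammaV2) :
    Odd (((A : SL2Z)).val 0 0 + ((A : SL2Z)).val 1 0) := by
  obtain ⟨hA1, hA2⟩ := A.2
  have hdet : ((A : SL2Z)).val 0 0 * ((A : SL2Z)).val 1 1
      - ((A : SL2Z)).val 0 1 * ((A : SL2Z)).val 1 0 = 1 := by
    have := (A : SL2Z).prop; rwa [Matrix.det_fin_two] at this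
  rw [even_iff_cast] at hA1 hA2
  push_cast at hA1 hA2
  have hdet2 : (((A : SL2Z)).val 0 0 : ZMod 2) * (((A : SL2Z)).val 1 1 : ZMod 2)
      - (((A : SL2Z)).val 0 1 : ZMod 2) * (((A : SL2Z)).val 1 0 : ZMod 2) = 1 := by
    have h := congrArg (fun z : ℤ => (z : ZMod 2)) hdet
    push_cast at h
    exact h
  have key : ∀ a b c d : ZMod 2, a*d - b*c = 1 → a*b = 0 → c*d = 0 → a + c = 1 := by decide
  have h1 := key _ _ _ _ hdet2 hA1 hA2
  rw [← Int.not_even_iff_odd, even_iff_cast]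
  push_cast
  rw [h1]
  decide

lemma exists_k : ∀ N : ℕ, ∀ a c : ℤ, a.natAbs ≤ N → c ≠ 0 → Odd (a + c) →
    ∃ k : ℤ, (a + 2*k*c).natAbs < c.natAbs := by
  intro N
  induction N with
  | zero =>
      intro a c ha hc _
      refine ⟨0, ?_⟩
      omega
  | succ n ih =>
      intro a c ha hc hodd
      obtain ⟨m, hm⟩ := hodd
      by_cases h1 : a.natAbs < c.natAbs
      · exact ⟨0, by omega⟩
      · by_cases h2 : a.natAbs = c.natAbs
        · exfalso; omega
        · have hchoice : (a+2*c).natAbs < a.natAbs ∨ (a-2*c).natAbs < a.natAbs := by omega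
          rcases hchoice with h3 | h3
          · obtain ⟨k', hk'⟩ := ih (a+2*c) c (by omega) hc ⟨m + c, by linarith⟩
            exact ⟨k' + 1, by have : a + 2*(k'+1)*c = (a+2*c) + 2*k'*c := by ring
                              rw [this]; exact hk'⟩
          · obtain ⟨k', hk'⟩ := ih (a-2*c) c (by omega) hc ⟨m - c, by linarith⟩
            exact ⟨k' - 1, by have : a + 2*(k'-1)*c = (a-2*c) + 2*k'*c := by ring
                              rw [this]; exact hk'⟩

def vG : GammaV2 := ⟨V, V_mem⟩
def tG : GammaV2 := ⟨T, T_mem⟩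

lemma vG_mem_range : vG ∈ φ.range := ⟨PresentedGroup.of 0, φ_of0⟩
lemma tG_mem_range : tG ∈ φ.range := ⟨PresentedGroup.of 1, φ_of1⟩

lemma tG_zpow_val (k : ℤ) : ((tG ^ k : GammaV2) : SL2Z).val = !![1, 2*k; 0, 1] := by
  have h : ((tG ^ k : GammaV2) : SL2Z) = T ^ k := by
    push_cast
    rfl
  rw [h, Tzpow]

lemma surj_aux : ∀ n : ℕ, ∀ A : GammaV2, (((A : SL2Z)).val 1 0).natAbs = n → A ∈ φ.range := by
  intro n
  induction n using Nat.strong_induction_on with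
  | _ n ih =>
    intro A hn
    set M := ((A : SL2Z)).val with hM
    have hdet : M 0 0 * M 1 1 - M 0 1 * M 1 0 = 1 := by
      have := (A : SL2Z).prop; rwa [Matrix.det_fin_two] at this
    by_cases hc : M 1 0 = 0
    · -- c = 0
      have had : M 0 0 * M 1 1 = 1 := by rw [← hdet, hc]; ring
      have hb : Even (M 0 0 * M 0 1) := A.2.1
      rcases (Int.mul_eq_one_iff_eq_one_or_neg_one.mp had) with ⟨ha, hd⟩ | ⟨ha, hd⟩
      · -- a = d = 1, A = T^(b/2)
        obtain ⟨m, hmb⟩ : Even (M 0 1) := by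
          rcases hb with ⟨m, hm⟩
          exact ⟨m, by rw [ha] at hm; linarith⟩
        have hA : A = tG ^ (m : ℤ) := by
          apply Subtype.ext
          apply Subtype.ext
          rw [tG_zpow_val]
          show M = _
          rw [Matrix.eta_fin_two M, ha, hd, hc, hmb]
          have hmm : m + m = 2 * m := by ring
          rw [hmm]
        rw [hA]
        exact Subgroup.zpow_mem _ tG_mem_range _
      · -- a = d = -1, A = vG^2 * tG^(-m)
        obtain ⟨m, hmb⟩ : Even (M 0 1) := by
          rcases hb with ⟨m', hm'⟩
          rw [ha] at hm'
          exact ⟨-m', by linarith⟩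
        have hA : A = vG^(2:ℕ) * tG ^ (-(m : ℤ)) := by
          apply Subtype.ext
          apply Subtype.ext
          show M = (((vG^(2:ℕ) * tG ^ (-(m : ℤ)) : GammaV2) : SL2Z)).val
          have hval : (((vG^(2:ℕ) * tG ^ (-(m : ℤ)) : GammaV2) : SL2Z)).val
              = (V*V : SL2Z).val * !![1, 2*(-(m:ℤ)); 0, 1] := by
            rw [← Tzpow]
            push_cast
            rw [pow_two]
            rfl
          rw [hval, Vsq_val, Matrix.eta_fin_two M, ha, hd, hc, hmb]
          rw [Matrix.mul_fin_two]
          norm_num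
          ring
        rw [hA]
        exact Subgroup.mul_mem _ (Subgroup.pow_mem _ vG_mem_range _)
          (Subgroup.zpow_mem _ tG_mem_range _)
    · -- c ≠ 0
      have hodd := parity_lemma A
      obtain ⟨k, hk⟩ := exists_k (M 0 0).natAbs (M 0 0) (M 1 0) le_rfl hc hodd
      set B : GammaV2 := vG * tG ^ k * A with hB
      have hB10 : (((B : SL2Z)).val) 1 0 = M 0 0 + 2*k*(M 1 0) := by
        show (((vG * tG ^ k * A : GammaV2) : SL2Z)).val 1 0 = _
        have hcoe : (((vG * tG ^ k * A : GammaV2) : SL2Z)).val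
            = V.val * (!![1, 2*k; 0, 1] * M) := by
          push_cast
          rw [← Tzpow, Matrix.SpecialLinearGroup.coe_mul, Matrix.SpecialLinearGroup.coe_mul,
            Matrix.mul_assoc]
          rfl
        rw [hcoe]
        simp [V, Matrix.mul_apply, Matrix.vecMul, dotProduct, Fin.sum_univ_two]
      have hBmem : B ∈ φ.range := by
        apply ih ((((B : SL2Z)).val 1 0).natAbs)
        · rw [hB10, ← hn]
          exact hk
        · rfl
      have hA : A = tG ^ (-k) * vG⁻¹ * B := by
        rw [hB]
        group
      rw [hA]
      exact Subgroup.mul_mem _ (Subgroup.mul_mem _ (Subgroup.zpow_mem _ tG_mem_range _)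
        (Subgroup.inv_mem _ vG_mem_range)) hBmem

lemma φ_surjective : Function.Surjective φ := by
  intro A
  have := surj_aux (((A : SL2Z)).val 1 0).natAbs A rfl
  obtain ⟨g, hg⟩ := this
  exact ⟨g, hg⟩

end
end GammaV2Pres

/-- `Γ_V(2)` admits the presentation `⟨v, t | v⁴ = 1, v²·t·v⁻²·t⁻¹ = 1⟩`:
the homomorphism from the presented group to `Γ_V(2)` sending `v` to `V` and `t` to `T`
is a group isomorphism. -/
theorem gammaV2_presentation :
    ∃ e : PresentedGroup gammaRels ≃* GammaV2,
      e (PresentedGroup.of 0) = ⟨V, V_mem⟩ ∧ e (PresentedGroup.of 1) = ⟨T, T_mem⟩ := by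
  refine ⟨MulEquiv.ofBijective GammaV2Pres.φ ⟨GammaV2Pres.φ_injective, GammaV2Pres.φ_surjective⟩, ?_, ?_⟩
  · exact GammaV2Pres.φ_of0
  · exact GammaV2Pres.φ_of1
end

section
/- The quotient of Γ_V(2) by its central subgroup {Id, -Id} (the subgroup generated by V² = -Id) is isomorphic to the free product (ℤ/2ℤ) * ℤ, via an isomorphism carrying the generator of the ℤ/2ℤ factor to the class of V = [[0,-1],[1,0]] and the generator of the ℤ factor to the class of T = [[1,2],[0,1]]. -/
/-- `-Id = [[-1,0],[0,-1]]` as an element of the subgroup `Γ_V(2)`. -/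
def negId : GammaV2 := ⟨⟨!![-1, 0; 0, -1], by norm_num [Matrix.det_fin_two_of]⟩,
  by constructor <;> simp⟩

lemma negId_matrix_eq : ((negId : SL2Z) : Matrix (Fin 2) (Fin 2) ℤ) = -1 := by
  ext i j
  fin_cases i <;> fin_cases j <;> simp [negId, Matrix.one_apply]

lemma negId_central (g : GammaV2) : negId * g = g * negId := by
  apply Subtype.ext
  apply Subtype.ext
  show ((negId : SL2Z) : Matrix (Fin 2) (Fin 2) ℤ) * ((g : SL2Z) : Matrix (Fin 2) (Fin 2) ℤ)
      = ((g : SL2Z) : Matrix (Fin 2) (Fin 2) ℤ) * ((negId : SL2Z) : Matrix (Fin 2) (Fin 2) ℤ)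
  rw [negId_matrix_eq, neg_one_mul, mul_neg_one]

/-- The subgroup `{Id, -Id}` of `Γ_V(2)` (the subgroup generated by `-Id = V²`)
is normal (indeed central). -/
instance : (Subgroup.zpowers negId).Normal := by
  constructor
  intro n hn g
  obtain ⟨k, rfl⟩ := hn
  refine ⟨k, ?_⟩
  have hc : Commute g negId := (negId_central g).symm
  rw [(hc.zpow_right k).eq, mul_assoc, mul_inv_cancel, mul_one]

section Helpers
open Matrix

lemma T_eq_T2 : T = ModularGroup.T ^ (2:ℤ) := by
  apply Subtype.ext; rw [ModularGroup.coe_T_zpow]; rfl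

lemma T_zpow_coe (m : ℤ) : ((T ^ m : SL2Z) : Matrix (Fin 2) (Fin 2) ℤ) = !![1, 2*m; 0, 1] := by
  rw [T_eq_T2, ← _root_.zpow_mul, ModularGroup.coe_T_zpow]

lemma V_coe : ((V : SL2Z) : Matrix (Fin 2) (Fin 2) ℤ) = !![0,-1;1,0] := rfl

def vv : GammaV2 := ⟨V, V_mem⟩
def tt : GammaV2 := ⟨T, T_mem⟩

lemma vv_sq : vv ^ 2 = negId := by
  apply Subtype.ext; apply Subtype.ext
  rw [pow_two]
  push_cast
  rw [negId_matrix_eq]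
  show (!![0,-1;1,0] : Matrix (Fin 2) (Fin 2) ℤ) * !![0,-1;1,0] = -1
  ext i j; fin_cases i <;> fin_cases j <;> simp [Matrix.mul_apply, Fin.sum_univ_two]

lemma tt_zpow_coe (m : ℤ) : (((tt ^ m : GammaV2) : SL2Z) : Matrix (Fin 2) (Fin 2) ℤ) = !![1, 2*m; 0, 1] := by
  rw [show ((tt ^ m : GammaV2) : SL2Z) = (T ^ m : SL2Z) from rfl, T_zpow_coe]

end Helpers
section Generation
open Matrix

/-- Arithmetic reduction step: can shift `a` by an even multiple of `c` to make it smaller. -/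
lemma reduce_step_pos (a c : ℤ) (hpos : 0 < c) (hpar : Odd (a + c)) :
    ∃ m : ℤ, (a + 2*m*c).natAbs < c.natAbs := by
  set b : ℤ := 2 * c with hbdef
  have hb : (0:ℤ) < b := by omega
  set q : ℤ := a / b with hq
  set r : ℤ := a % b with hr
  have h0 : 0 ≤ r := Int.emod_nonneg a (by omega)
  have h1 : r < b := Int.emod_lt_of_pos a hb
  have hdiv : b * q + r = a := Int.mul_ediv_add_emod a b
  set p : ℤ := c * q with hp
  have hbq : b * q = 2 * p := by rw [hbdef, hp]; ring
  have hrne : r ≠ c := by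
    rcases hpar with ⟨k, hk⟩
    omega
  refine ⟨if r < c then -q else -(q+1), ?_⟩
  split
  · have : 2 * (-q) * c = -(2*p) := by rw [hp]; ring
    omega
  · have : 2 * (-(q+1)) * c = -(2*p) - b := by rw [hp, hbdef]; ring
    omega

/-- Arithmetic reduction step: can shift `a` by an even multiple of `c` to make it smaller. -/
lemma reduce_step (a c : ℤ) (hc : c ≠ 0) (hpar : Odd (a + c)) :
    ∃ m : ℤ, (a + 2*m*c).natAbs < c.natAbs := by
  rcases hc.lt_or_gt with hneg | hpos
  · obtain ⟨m, hm⟩ := reduce_step_pos a (-c) (by omega)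
      (by rcases hpar with ⟨k, hk⟩; exact ⟨k - c, by omega⟩)
    refine ⟨-m, ?_⟩
    have h2 : a + 2*(-m)*c = a + 2*m*(-c) := by ring
    omega
  · exact reduce_step_pos a c hpos hpar

end Generation
section Gen2
open Matrix

private lemma key_parity : ∀ a b c d : ZMod 2, a*b = 0 → c*d = 0 → a*d - b*c = 1 → a + c = 1 := by decide

lemma gamma_det (A : GammaV2) :
    ((A:SL2Z) : Matrix (Fin 2) (Fin 2) ℤ) 0 0 * ((A:SL2Z) : Matrix (Fin 2) (Fin 2) ℤ) 1 1
    - ((A:SL2Z) : Matrix (Fin 2) (Fin 2) ℤ) 0 1 * ((A:SL2Z) : Matrix (Fin 2) (Fin 2) ℤ) 1 0 = 1 := by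
  have := (A : SL2Z).prop
  rwa [Matrix.det_fin_two] at this

lemma gamma_even1 (A : GammaV2) :
    Even (((A:SL2Z) : Matrix (Fin 2) (Fin 2) ℤ) 0 0 * ((A:SL2Z) : Matrix (Fin 2) (Fin 2) ℤ) 0 1) :=
  A.2.1

lemma gamma_even2 (A : GammaV2) :
    Even (((A:SL2Z) : Matrix (Fin 2) (Fin 2) ℤ) 1 0 * ((A:SL2Z) : Matrix (Fin 2) (Fin 2) ℤ) 1 1) :=
  A.2.2

lemma gamma_odd (A : GammaV2) :
    Odd (((A:SL2Z) : Matrix (Fin 2) (Fin 2) ℤ) 0 0 + ((A:SL2Z) : Matrix (Fin 2) (Fin 2) ℤ) 1 0) := by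
  set a := ((A:SL2Z) : Matrix (Fin 2) (Fin 2) ℤ) 0 0
  set b := ((A:SL2Z) : Matrix (Fin 2) (Fin 2) ℤ) 0 1
  set c := ((A:SL2Z) : Matrix (Fin 2) (Fin 2) ℤ) 1 0
  set d := ((A:SL2Z) : Matrix (Fin 2) (Fin 2) ℤ) 1 1
  have h1 := gamma_even1 A
  have h2 := gamma_even2 A
  have h3 := gamma_det A
  rw [even_iff_cast] at h1 h2
  push_cast at h1 h2
  have h3' : ((a : ZMod 2)) * d - b * c = 1 := by
    have := congrArg (fun z : ℤ => (z : ZMod 2)) h3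
    push_cast at this
    convert this using 2 <;> push_cast <;> ring
  have key := key_parity (a : ZMod 2) b c d h1 (by linear_combination h2) h3'
  rw [← Int.not_even_iff_odd, even_iff_cast]
  push_cast
  intro h
  rw [h] at key
  exact one_ne_zero key.symm
end Gen2
section Gen3
open Matrix Subgroup

lemma vv_mem_closure : vv ∈ Subgroup.closure {vv, tt} :=
  Subgroup.subset_closure (Set.mem_insert _ _)

lemma tt_mem_closure : tt ∈ Subgroup.closure {vv, tt} :=
  Subgroup.subset_closure (Set.mem_insert_of_mem _ rfl)

lemma closure_aux : ∀ n : ℕ, ∀ A : GammaV2,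
    (((A:SL2Z) : Matrix (Fin 2) (Fin 2) ℤ) 1 0).natAbs = n →
    A ∈ Subgroup.closure {vv, tt} := by
  intro n
  induction n using Nat.strong_induction_on with
  | _ n ih =>
    intro A hA
    set M := ((A:SL2Z) : Matrix (Fin 2) (Fin 2) ℤ) with hM
    by_cases hc : M 1 0 = 0
    · -- base case : A = ± T^k
      have hdet := gamma_det A
      rw [← hM, hc, mul_zero, sub_zero] at hdet
      have hb : Even (M 0 0 * M 0 1) := gamma_even1 A
      have hbase := Int.mul_eq_one_iff_eq_one_or_neg_one.mp hdet
      have hbeven : Even (M 0 1) := by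
        rcases hbase with ⟨h1, _⟩ | ⟨h1, _⟩ <;> rw [h1] at hb
        · simpa using hb
        · rcases hb with ⟨k, hk⟩; exact ⟨-k, by omega⟩
      obtain ⟨k, hk⟩ := hbeven
      rcases hbase with ⟨h1, h2⟩ | ⟨h1, h2⟩
      · have hAeq : A = tt ^ k := by
          apply Subtype.ext; apply Subtype.ext
          show M = (((tt ^ k : GammaV2) : SL2Z) : Matrix (Fin 2) (Fin 2) ℤ)
          rw [tt_zpow_coe]
          ext i j; fin_cases i <;> fin_cases j <;> simp <;> omega
        rw [hAeq]; exact zpow_mem tt_mem_closure k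
      · have hAeq : A = vv ^ 2 * tt ^ (-k) := by
          apply Subtype.ext; apply Subtype.ext
          rw [vv_sq]
          show M = (((negId * tt ^ (-k) : GammaV2) : SL2Z) : Matrix (Fin 2) (Fin 2) ℤ)
          rw [show (((negId * tt ^ (-k) : GammaV2) : SL2Z) : Matrix (Fin 2) (Fin 2) ℤ)
              = ((negId : SL2Z) : Matrix (Fin 2) (Fin 2) ℤ)
                * (((tt ^ (-k) : GammaV2) : SL2Z) : Matrix (Fin 2) (Fin 2) ℤ) from rfl,
            negId_matrix_eq, tt_zpow_coe]
          ext i j; fin_cases i <;> fin_cases j <;>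
            simp [Matrix.mul_apply, Fin.sum_univ_two] <;> omega
        rw [hAeq]
        exact mul_mem (pow_mem vv_mem_closure 2) (zpow_mem tt_mem_closure (-k))
    · -- descent
      have hodd := gamma_odd A
      obtain ⟨m, hm⟩ := reduce_step (M 0 0) (M 1 0) hc (by rwa [← hM] at hodd)
      set B : GammaV2 := vv * (tt ^ m * A) with hB
      have hBent : ((B:SL2Z) : Matrix (Fin 2) (Fin 2) ℤ) 1 0 = M 0 0 + 2*m*(M 1 0) := by
        show (((vv:SL2Z) * (((tt^m : GammaV2):SL2Z) * (A:SL2Z)) : SL2Z)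
            : Matrix (Fin 2) (Fin 2) ℤ) 1 0 = _
        rw [Matrix.SpecialLinearGroup.coe_mul, Matrix.SpecialLinearGroup.coe_mul, tt_zpow_coe]
        show ((!![0,-1;1,0] : Matrix (Fin 2) (Fin 2) ℤ) * (!![1, 2*m; 0, 1] * M)) 1 0 = _
        simp [Matrix.mul_apply, Matrix.vecMul, dotProduct, Fin.sum_univ_two]
        try ring
      have hBmem : B ∈ Subgroup.closure {vv, tt} := by
        apply ih _ (by rw [← hA]; exact hm) B
        rw [hBent]
      have hAeq : A = (tt ^ m)⁻¹ * (vv⁻¹ * B) := by rw [hB]; group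
      rw [hAeq]
      exact mul_mem (inv_mem (zpow_mem tt_mem_closure m))
        (mul_mem (inv_mem vv_mem_closure) hBmem)

lemma closure_eq_top : Subgroup.closure ({vv, tt} : Set GammaV2) = ⊤ := by
  rw [eq_top_iff]
  intro A _
  exact closure_aux _ A rfl
end Gen3
section Hom
open Matrix

abbrev Qg := GammaV2 ⧸ Subgroup.zpowers negId

def qv : Qg := QuotientGroup.mk vv
def qt : Qg := QuotientGroup.mk tt

lemma qv_sq : qv ^ 2 = 1 := by
  rw [qv, ← QuotientGroup.mk_pow, vv_sq, QuotientGroup.eq_one_iff]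
  exact Subgroup.mem_zpowers negId

def fV : Multiplicative (ZMod 2) →* Qg :=
  AddMonoidHom.toMultiplicativeLeft ((ZMod.lift 2)
    ⟨(zmultiplesHom (Additive Qg)) (Additive.ofMul qv), by
      show ((2:ℕ):ℤ) • Additive.ofMul qv = 0
      rw [show (((2:ℕ):ℤ)) = (2:ℤ) by norm_num, ← ofMul_zpow,
        show qv ^ (2:ℤ) = qv ^ (2:ℕ) by norm_cast, qv_sq]
      rfl⟩)

lemma fV_apply_one : fV (Multiplicative.ofAdd (1 : ZMod 2)) = qv := by
  unfold fV
  rw [AddMonoidHom.coe_toMultiplicativeLeft]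
  show Additive.toMul ((ZMod.lift 2 ⟨_, _⟩) ((Multiplicative.ofAdd (1 : ZMod 2)).toAdd)) = qv
  rw [show ((Multiplicative.ofAdd (1 : ZMod 2)).toAdd) = ((1:ℤ) : ZMod 2) by norm_num,
    ZMod.lift_coe]
  show Additive.toMul ((1:ℤ) • Additive.ofMul qv) = qv
  simp

def fT : Multiplicative ℤ →* Qg := zpowersHom Qg qt

lemma fT_apply (n : ℤ) : fT (Multiplicative.ofAdd n) = qt ^ n := rfl

def φ : Monoid.Coprod (Multiplicative (ZMod 2)) (Multiplicative ℤ) →* Qg :=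
  Monoid.Coprod.lift fV fT

lemma φ_inl (x) : φ (Monoid.Coprod.inl x) = fV x := by simp [φ]
lemma φ_inr (x) : φ (Monoid.Coprod.inr x) = fT x := by simp [φ]

lemma φ_surj : Function.Surjective φ := by
  intro q
  obtain ⟨A, rfl⟩ := QuotientGroup.mk_surjective q
  have hA : A ∈ Subgroup.closure ({vv, tt} : Set GammaV2) := by
    rw [closure_eq_top]; trivial
  show (QuotientGroup.mk A : Qg) ∈ φ.range
  induction hA using Subgroup.closure_induction with
  | mem x hx =>
    rcases hx with rfl | hx
    · exact ⟨Monoid.Coprod.inl (Multiplicative.ofAdd (1 : ZMod 2)), by rw [φ_inl, fV_apply_one]; rfl⟩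
    · rcases hx with rfl
      exact ⟨Monoid.Coprod.inr (Multiplicative.ofAdd (1 : ℤ)), by rw [φ_inr, fT_apply, zpow_one]; rfl⟩
  | one => exact ⟨1, by simp⟩
  | mul x y _ _ hx hy =>
    rcases hx with ⟨u, hu⟩; rcases hy with ⟨w, hw⟩
    exact ⟨u * w, by rw [_root_.map_mul, hu, hw]; rfl⟩
  | inv x _ hx =>
    rcases hx with ⟨u, hu⟩
    exact ⟨u⁻¹, by rw [_root_.map_inv, hu]; rfl⟩
end Hom
section PingPong
open Matrix UpperHalfPlane

lemma V_eq_S : V = ModularGroup.S := Subtype.ext ModularGroup.coe_S.symm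

lemma negId_coe : (negId : SL2Z) = -1 := by
  apply Subtype.ext
  rw [negId_matrix_eq]
  rfl

noncomputable def ρ : GammaV2 →* Equiv.Perm ℍ :=
  (MulAction.toPermHom SL2Z ℍ).comp GammaV2.subtype

lemma ρ_ker : Subgroup.zpowers negId ≤ ρ.ker := by
  rw [Subgroup.zpowers_le]
  rw [MonoidHom.mem_ker]
  apply Equiv.ext
  intro z
  show (negId : SL2Z) • z = z
  rw [negId_coe, show ((-1 : SL2Z)) = -(1 : SL2Z) from rfl, ModularGroup.SL_neg_smul, one_smul]

noncomputable def ρ' : Qg →* Equiv.Perm ℍ := QuotientGroup.lift _ ρ ρ_ker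

noncomputable instance qgAction : MulAction Qg ℍ := MulAction.compHom ℍ ρ'

lemma qg_smul (A : GammaV2) (z : ℍ) : (QuotientGroup.mk A : Qg) • z = (A : SL2Z) • z := rfl

end PingPong
section PingPong2
open Matrix UpperHalfPlane

lemma qv_smul_coe (z : ℍ) : ((qv • z : ℍ) : ℂ) = (-(z:ℂ))⁻¹ := by
  rw [qv, qg_smul,
    show ((vv : GammaV2) : SL2Z) = ModularGroup.S from by rw [← V_eq_S]; rfl,
    modular_S_smul, coe_mk]

lemma qt_zpow_smul_coe (n : ℤ) (z : ℍ) : ((qt ^ n • z : ℍ) : ℂ) = 2 * n + z := by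
  rw [show (qt ^ n : Qg) = QuotientGroup.mk (tt ^ n) from rfl, qg_smul,
    show ((tt ^ n : GammaV2) : SL2Z) = ModularGroup.T ^ (2 * n) from by
      show (T ^ n : SL2Z) = _
      rw [T_eq_T2, ← _root_.zpow_mul],
    modular_T_zpow_smul, coe_vadd]
  push_cast
  ring

def Hfam : Bool → Type := fun b => cond b (Multiplicative ℤ) (Multiplicative (ZMod 2))

instance : ∀ b, Group (Hfam b) := fun b => match b with
  | false => inferInstanceAs (Group (Multiplicative (ZMod 2)))
  | true => inferInstanceAs (Group (Multiplicative ℤ))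

noncomputable def F : ∀ b, Hfam b →* Qg := fun b => match b with
  | false => fV
  | true => fT

def θ : Monoid.Coprod (Multiplicative (ZMod 2)) (Multiplicative ℤ) →* Monoid.CoprodI Hfam :=
  Monoid.Coprod.lift
    (show Multiplicative (ZMod 2) →* Monoid.CoprodI Hfam from
      (Monoid.CoprodI.of : Hfam false →* Monoid.CoprodI Hfam))
    (show Multiplicative ℤ →* Monoid.CoprodI Hfam from
      (Monoid.CoprodI.of : Hfam true →* Monoid.CoprodI Hfam))

def θinv : Monoid.CoprodI Hfam →* Monoid.Coprod (Multiplicative (ZMod 2)) (Multiplicative ℤ) :=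
  Monoid.CoprodI.lift (fun b => match b with
    | false => Monoid.Coprod.inl
    | true => Monoid.Coprod.inr)

lemma θinv_θ : θinv.comp θ = MonoidHom.id _ := by
  apply Monoid.Coprod.hom_ext
  · apply MonoidHom.ext; intro x
    show θinv (θ (Monoid.Coprod.inl x)) = Monoid.Coprod.inl x
    rw [θ, Monoid.Coprod.lift_apply_inl]
    exact Monoid.CoprodI.lift_of _ _
  · apply MonoidHom.ext; intro x
    show θinv (θ (Monoid.Coprod.inr x)) = Monoid.Coprod.inr x
    rw [θ, Monoid.Coprod.lift_apply_inr]
    exact Monoid.CoprodI.lift_of _ _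

lemma θ_inj : Function.Injective θ :=
  Function.LeftInverse.injective (g := θinv) fun x => DFunLike.congr_fun θinv_θ x

lemma liftF_θ : (Monoid.CoprodI.lift F).comp θ = φ := by
  apply Monoid.Coprod.hom_ext
  · apply MonoidHom.ext; intro x
    show (Monoid.CoprodI.lift F) (θ (Monoid.Coprod.inl x)) = φ (Monoid.Coprod.inl x)
    rw [θ, Monoid.Coprod.lift_apply_inl, φ_inl]
    exact Monoid.CoprodI.lift_of _ _
  · apply MonoidHom.ext; intro x
    show (Monoid.CoprodI.lift F) (θ (Monoid.Coprod.inr x)) = φ (Monoid.Coprod.inr x)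
    rw [θ, Monoid.Coprod.lift_apply_inr, φ_inr]
    exact Monoid.CoprodI.lift_of _ _

end PingPong2
section PingPong3
open Matrix UpperHalfPlane Pointwise

noncomputable def Xpp : Bool → Set ℍ := fun b =>
  cond b {z : ℍ | 1 < ‖(z:ℂ)‖} {z : ℍ | ‖(z:ℂ)‖ < 1}

lemma Xpp_nonempty : ∀ b, (Xpp b).Nonempty := by
  intro b
  cases b
  · refine ⟨UpperHalfPlane.mk (Complex.I/2) (by simp), ?_⟩
    show ‖(Complex.I/2)‖ < 1
    norm_num [Complex.norm_def, Complex.normSq_apply]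
  · refine ⟨UpperHalfPlane.mk (2*Complex.I) (by simp), ?_⟩
    show 1 < ‖(2*Complex.I)‖
    simp

lemma Xpp_disj : Pairwise (Function.onFun Disjoint Xpp) := by
  intro i j hij
  simp only [Function.onFun]
  rw [Set.disjoint_left]
  intro z hz1 hz2
  cases i <;> cases j <;> simp_all [Xpp] <;> first | exact hij rfl | linarith

lemma hfam_false_ne (h : Hfam false) (hne : h ≠ 1) : h = Multiplicative.ofAdd (1 : ZMod 2) := by
  revert hne
  show h ≠ 1 → h = Multiplicative.ofAdd (1 : ZMod 2)
  exact (by decide : ∀ x : Multiplicative (ZMod 2), x ≠ 1 → x = Multiplicative.ofAdd (1 : ZMod 2)) h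

lemma Xpp_pp : Pairwise fun i j => ∀ h : Hfam i, h ≠ 1 → F i h • Xpp j ⊆ Xpp i := by
  intro i j hij
  cases i
  · -- i = false : V
    intro h hne
    rw [hfam_false_ne h hne]
    cases j
    · exact absurd rfl hij
    · -- z ∈ X true : abs > 1, show abs (V • z) < 1
      rintro z ⟨w, hw, rfl⟩
      have h1 : (1:ℝ) < ‖(w:ℂ)‖ := hw
      show ‖((((F false (Multiplicative.ofAdd (1 : ZMod 2))) • w : ℍ)):ℂ)‖ < 1
      have hFv : F false (Multiplicative.ofAdd (1 : ZMod 2)) = qv := fV_apply_one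
      rw [hFv, qv_smul_coe]
      rw [norm_inv, norm_neg]
      rw [inv_lt_one_iff₀]
      right; exact h1
  · -- i = true : T^n
    intro h hne
    cases j
    swap
    · exact absurd rfl hij
    · rintro z ⟨w, hw, rfl⟩
      have h1 : ‖(w:ℂ)‖ < 1 := hw
      set n : ℤ := Multiplicative.toAdd h with hn
      have hFt : F true h = qt ^ n := rfl
      show (1:ℝ) < ‖(((F true h • w : ℍ)):ℂ)‖
      rw [hFt, qt_zpow_smul_coe]
      have hre : |((2*n + w : ℂ)).re| ≤ ‖((2*n + w : ℂ))‖ := Complex.abs_re_le_norm _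
      have hre2 : ((2*(n:ℂ) + (w:ℂ))).re = 2*(n:ℝ) + (w:ℂ).re := by
        simp
      have hwre : |(w:ℂ).re| ≤ ‖(w:ℂ)‖ := Complex.abs_re_le_norm _
      have hn0 : n ≠ 0 := fun h0 => hne (by
        rw [hn] at h0
        exact (congrArg Multiplicative.ofAdd h0 : h = 1))
      have hn1 : (1:ℝ) ≤ |(n:ℝ)| := by
        have h2 : (1:ℤ) ≤ |n| := by
          rcases abs_cases n with ⟨h',_⟩|⟨h',_⟩ <;> omega
        calc (1:ℝ) ≤ ((|n| : ℤ) : ℝ) := by exact_mod_cast h2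
        _ = |(n:ℝ)| := by push_cast; simp
      calc (1:ℝ) < 2*|(n:ℝ)| - |(w:ℂ).re| := by nlinarith [abs_nonneg (w:ℂ).re]
      _ ≤ |2*(n:ℝ) + (w:ℂ).re| := by
          rcases abs_cases ((2:ℝ)*(n:ℝ) + (w:ℂ).re) with ⟨ha1,ha2⟩|⟨ha1,ha2⟩ <;>
          rcases abs_cases ((n:ℝ)) with ⟨hb1,hb2⟩|⟨hb1,hb2⟩ <;>
          rcases abs_cases ((w:ℂ).re) with ⟨hc1,hc2⟩|⟨hc1,hc2⟩ <;>
          rw [ha1, hb1, hc1] <;> linarith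
      _ ≤ ‖((2*(n:ℂ) + (w:ℂ)))‖ := by rw [← hre2] at *; exact hre
end PingPong3

lemma φ_inj : Function.Injective φ := by
  have hcard : 3 ≤ Cardinal.mk Bool ∨ ∃ i, 3 ≤ Cardinal.mk (Hfam i) := by
    right
    refine ⟨true, ?_⟩
    show (3:Cardinal) ≤ Cardinal.mk (Multiplicative ℤ)
    exact le_trans (le_of_lt (Cardinal.nat_lt_aleph0 3)) (Cardinal.aleph0_le_mk _)
  have hFinj : Function.Injective (Monoid.CoprodI.lift F) :=
    Monoid.CoprodI.lift_injective_of_ping_pong F hcard Xpp Xpp_nonempty Xpp_disj Xpp_pp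
  have hφ : ⇑φ = ⇑(Monoid.CoprodI.lift F) ∘ ⇑θ := by rw [← liftF_θ]; rfl
  rw [hφ]
  exact hFinj.comp θ_inj


/-- The quotient of `Γ_V(2)` by its central subgroup `{Id, -Id}` is isomorphic to the
free product `(ℤ/2ℤ) ∗ ℤ`, via an isomorphism carrying the generator of the `ℤ/2ℤ`
factor to the class of `V` and the generator of the `ℤ` factor to the class of `T`. -/
theorem gammaV2_mod_center_iso_coprod :
    ∃ e : Monoid.Coprod (Multiplicative (ZMod 2)) (Multiplicative ℤ) ≃*
        (GammaV2 ⧸ Subgroup.zpowers negId),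
      e (Monoid.Coprod.inl (Multiplicative.ofAdd (1 : ZMod 2))) =
        QuotientGroup.mk (⟨V, V_mem⟩ : GammaV2) ∧
      e (Monoid.Coprod.inr (Multiplicative.ofAdd (1 : ℤ))) =
        QuotientGroup.mk (⟨T, T_mem⟩ : GammaV2) := by
  refine ⟨MulEquiv.ofBijective φ ⟨φ_inj, φ_surj⟩, ?_, ?_⟩
  · show φ (Monoid.Coprod.inl (Multiplicative.ofAdd (1 : ZMod 2)))
        = QuotientGroup.mk (⟨V, V_mem⟩ : GammaV2)
    rw [φ_inl, fV_apply_one]; rfl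
  · show φ (Monoid.Coprod.inr (Multiplicative.ofAdd (1 : ℤ)))
        = QuotientGroup.mk (⟨T, T_mem⟩ : GammaV2)
    rw [φ_inr, fT_apply, zpow_one]; rfl
end
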